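/- The communication models p2p, causal, and bag are causally-closed: for each of these models Com and every MSC M, if lin_Com(M) ≠ ∅ then lin_Com(M) = lin(M). -/

import Mathlib

/-! ## Common definitions: actions, executions, MSCs, communication models,
communicating finite state machines, and global types. -/

/-- Actions: a send `p▷q!m` or a receive `p▷q?m`. -/
inductive Act (P M : Type) : Type where
  | snd (p q : P) (m : M)
  | rcv (p q : P) (m : M)
deriving DecidableEq

namespace Act
variable {P M : Type}

/-- The process executing an action: a send belongs to the sender,
a receive belongs to the receiver. -/
def proc : Act P M → P
  | .snd p _ _ => p
  | .rcv _ q _ => q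

end Act

/-- Raw executions: a word of actions together with a source function on positions. -/
structure Exec (P M : Type) : Type where
  w : List (Act P M)
  src : ℕ → ℕ

namespace Exec
variable {P M : Type}

def act? (e : Exec P M) (i : ℕ) : Option (Act P M) := e.w[i]?

def IsSend (e : Exec P M) (i : ℕ) : Prop := ∃ p q m, e.act? i = some (.snd p q m)

def IsRecv (e : Exec P M) (i : ℕ) : Prop := ∃ p q m, e.act? i = some (.rcv p q m)

/-- Well-formedness of an execution: each receive event `r` labelled `p▷q?m` has a
source send event `src r < r` labelled `p▷q!m`, and `src` is injective on receive events. -/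
def WF (e : Exec P M) : Prop :=
  (∀ i p q m, e.act? i = some (.rcv p q m) →
    e.src i < i ∧ e.act? (e.src i) = some (.snd p q m)) ∧
  (∀ i j, e.IsRecv i → e.IsRecv j → e.src i = e.src j → i = j)

/-- A send event is matched if it is the source of some receive event. -/
def Matched (e : Exec P M) (s : ℕ) : Prop := ∃ r, e.IsRecv r ∧ e.src r = s

def OrphanFree (e : Exec P M) : Prop := ∀ s, e.IsSend s → e.Matched s

/-- Prefix of executions: the word is a prefix and the source functions agree
on the receive events of the shorter one. -/
def IsPrefix (e₁ e₂ : Exec P M) : Prop :=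
  e₁.w <+: e₂.w ∧ ∀ i, e₁.IsRecv i → e₁.src i = e₂.src i

/-- Projection of an execution onto the actions of a process. -/
def proj (e : Exec P M) [DecidableEq P] (p : P) : List (Act P M) :=
  e.w.filter (fun a => decide (a.proc = p))

/-- The MSC event `(process, index within the process)` at a position of the word. -/
def evOf (e : Exec P M) [DecidableEq P] (i : ℕ) : Option (P × ℕ) :=
  (e.act? i).map
    (fun a => (a.proc, ((e.w.take i).filter (fun b => decide (b.proc = a.proc))).length))

/-- The position in the word of the `i`-th event of process `p`. -/
def posOf (e : Exec P M) [DecidableEq P] (ev : P × ℕ) : ℕ :=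
  ((List.range e.w.length).filter
    (fun k => decide ((e.act? k).map Act.proc = some ev.1))).getD ev.2 0

end Exec

/-- Raw MSCs: a word of actions per process, and a source function on events. -/
structure MSC (P M : Type) : Type where
  w : P → List (Act P M)
  src : P × ℕ → P × ℕ

namespace MSC
variable {P M : Type}

def act? (Mm : MSC P M) (ev : P × ℕ) : Option (Act P M) := (Mm.w ev.1)[ev.2]?

def IsSend (Mm : MSC P M) (ev : P × ℕ) : Prop := ∃ p q m, Mm.act? ev = some (.snd p q m)

def IsRecv (Mm : MSC P M) (ev : P × ℕ) : Prop := ∃ p q m, Mm.act? ev = some (.rcv p q m)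

/-- Well-formedness of an MSC. -/
def WF (Mm : MSC P M) : Prop :=
  (∀ p, ∀ a ∈ Mm.w p, a.proc = p) ∧
  (∀ ev p q m, Mm.act? ev = some (.rcv p q m) → Mm.act? (Mm.src ev) = some (.snd p q m)) ∧
  (∀ ev ev', Mm.IsRecv ev → Mm.IsRecv ev' → Mm.src ev = Mm.src ev' → ev = ev')

/-- Basic happens-before steps: process order and message order. -/
inductive hbBase (Mm : MSC P M) : P × ℕ → P × ℕ → Prop where
  | proc (p : P) (i j : ℕ) : i < j → j < (Mm.w p).length → hbBase Mm (p, i) (p, j)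
  | msg (ev : P × ℕ) : Mm.IsRecv ev → hbBase Mm (Mm.src ev) ev

/-- The happens-before relation: least transitive relation containing the basic steps. -/
def hb (Mm : MSC P M) : P × ℕ → P × ℕ → Prop := Relation.TransGen (hbBase Mm)

/-- Prefix of MSCs. -/
def IsPrefix (M₁ M₂ : MSC P M) : Prop :=
  (∀ p, M₁.w p <+: M₂.w p) ∧ ∀ ev, M₁.IsRecv ev → M₁.src ev = M₂.src ev

end MSC

/-- Prefix closure of a set of MSCs. -/
def prefSet {P M : Type} (X : Set (MSC P M)) : Set (MSC P M) :=
  {Mm | ∃ M' ∈ X, Mm.IsPrefix M'}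

/-- The MSC of an execution: project onto each process and lift the source function. -/
def Exec.toMSC {P M : Type} [DecidableEq P] (e : Exec P M) : MSC P M where
  w p := e.w.filter (fun a => decide (a.proc = p))
  src ev := (e.evOf (e.src (e.posOf ev))).getD ev

/-- The linearisations of an MSC, identified with the executions they induce. -/
def lin {P M : Type} [DecidableEq P] (Mm : MSC P M) : Set (Exec P M) :=
  {e | e.WF ∧ e.toMSC = Mm}

/-- The linearisations of an MSC lying in a communication model. -/
def linC {P M : Type} [DecidableEq P] (Com : Set (Exec P M)) (Mm : MSC P M) :
    Set (Exec P M) :=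
  lin Mm ∩ Com

/-- A communication model (a set of executions) is causally closed if whenever an MSC
has a linearisation in the model, all its linearisations are in the model. -/
def CausallyClosed {P M : Type} [DecidableEq P] (Com : Set (Exec P M)) : Prop :=
  ∀ Mm : MSC P M, (linC Com Mm).Nonempty → linC Com Mm = lin Mm

/-- The MSCs linearisable in a communication model. -/
def MSCModel {P M : Type} [DecidableEq P] (Com : Set (Exec P M)) : Set (MSC P M) :=
  {Mm | (linC Com Mm).Nonempty}

/-- The bag communication model: all executions. -/
def bag {P M : Type} : Set (Exec P M) := {e | e.WF}

/-- The synchronous communication model: every send is immediately followed by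
its matching receive. -/
def synch {P M : Type} : Set (Exec P M) :=
  {e | e.WF ∧ ∀ s, e.IsSend s → e.IsRecv (s + 1) ∧ e.src (s + 1) = s}

/-- The peer-to-peer communication model. -/
def p2p {P M : Type} : Set (Exec P M) :=
  {e | e.WF ∧ ∀ s₁ s₂ p q m₁ m₂,
    e.act? s₁ = some (.snd p q m₁) → e.act? s₂ = some (.snd p q m₂) → s₁ < s₂ →
    (¬ e.Matched s₂ ∨
      ∃ r₁ r₂, r₁ < r₂ ∧ e.IsRecv r₁ ∧ e.IsRecv r₂ ∧ e.src r₁ = s₁ ∧ e.src r₂ = s₂)}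

/-- Happens-before between positions of an execution, through its MSC. -/
def Exec.hbM {P M : Type} [DecidableEq P] (e : Exec P M) (i j : ℕ) : Prop :=
  ∃ ev₁ ev₂, e.evOf i = some ev₁ ∧ e.evOf j = some ev₂ ∧ e.toMSC.hb ev₁ ev₂

/-- The causally ordered communication model. -/
def causal {P M : Type} [DecidableEq P] : Set (Exec P M) :=
  {e | e.WF ∧ ∀ s₁ s₂ p₁ p₂ q m₁ m₂,
    e.act? s₁ = some (.snd p₁ q m₁) → e.act? s₂ = some (.snd p₂ q m₂) → e.hbM s₁ s₂ →
    (¬ e.Matched s₂ ∨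
      ∃ r₁ r₂, e.hbM r₁ r₂ ∧ e.IsRecv r₁ ∧ e.IsRecv r₂ ∧ e.src r₁ = s₁ ∧ e.src r₂ = s₂)}

/-- A communicating finite state machine: an NFA with ε-transitions
(over the actions of a process) with finitely many states. -/
structure CFSM (A : Type) : Type 1 where
  State : Type
  fin : Fintype State
  aut : εNFA A State

instance {A : Type} (c : CFSM A) : Fintype c.State := c.fin

/-- The machine obtained by making all states accepting. -/
def CFSM.up {A : Type} (c : CFSM A) : CFSM A :=
  ⟨c.State, c.fin, { c.aut with accept := Set.univ }⟩

/-- Making all states of all machines of a system accepting. -/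
def sysUp {P M : Type} (S : P → CFSM (Act P M)) : P → CFSM (Act P M) :=
  fun p => (S p).up

/-- `Exec(S, Com)`: the executions of a system of CFSMs in a communication model. -/
def ExecSys {P M : Type} [DecidableEq P] (S : P → CFSM (Act P M)) (Com : Set (Exec P M)) :
    Set (Exec P M) :=
  {e | e ∈ Com ∧ ∀ p, e.proj p ∈ (S p).aut.accepts}

/-- `MSC(S, Com)`: the MSCs of the executions of a system of CFSMs. -/
def MSCSys {P M : Type} [DecidableEq P] (S : P → CFSM (Act P M)) (Com : Set (Exec P M)) :
    Set (MSC P M) :=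
  Exec.toMSC '' ExecSys S Com

/-- A system is deadlock-free for `Com` if every execution of the system with all states
accepting is a prefix of an accepting execution of the system. -/
def DeadlockFree {P M : Type} [DecidableEq P] (S : P → CFSM (Act P M))
    (Com : Set (Exec P M)) : Prop :=
  ∀ e ∈ ExecSys (sysUp S) Com, ∃ e' ∈ ExecSys S Com, e.IsPrefix e'

/-- A system is orphan-free for `Com` if all its executions are orphan-free. -/
def SysOrphanFree {P M : Type} [DecidableEq P] (S : P → CFSM (Act P M))
    (Com : Set (Exec P M)) : Prop :=
  ∀ e ∈ ExecSys S Com, e.OrphanFree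

/-- An arrow `p→q:m` with `p ≠ q`. -/
def Arrow (P M : Type) : Type := {x : P × P × M // x.1 ≠ x.2.1}

namespace Arrow
variable {P M : Type}

def sender (a : Arrow P M) : P := a.1.1
def receiver (a : Arrow P M) : P := a.1.2.1
def msg (a : Arrow P M) : M := a.1.2.2
def sendAct (a : Arrow P M) : Act P M := .snd a.sender a.receiver a.msg
def recvAct (a : Arrow P M) : Act P M := .rcv a.sender a.receiver a.msg

/-- Two arrows commute when their pairs of processes are disjoint. -/
def Commutes (a b : Arrow P M) : Prop :=
  a.sender ≠ b.sender ∧ a.sender ≠ b.receiver ∧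
    a.receiver ≠ b.sender ∧ a.receiver ≠ b.receiver

instance [DecidableEq P] [Fintype P] [Fintype M] : Fintype (Arrow P M) :=
  Subtype.fintype _

end Arrow

/-- A global type: a deterministic finite (possibly partial) automaton over arrows. -/
structure GType (P M : Type) : Type 1 where
  State : Type
  fin : Fintype State
  step : State → Arrow P M → Option State
  start : State
  accept : Set State

instance {P M : Type} (G : GType P M) : Fintype G.State := G.fin

namespace GType
variable {P M : Type}

def evalFrom (G : GType P M) (s : Option G.State) (w : List (Arrow P M)) : Option G.State :=
  w.foldl (fun s a => s.bind (fun q => G.step q a)) s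

/-- The word language of a global type. -/
def lang (G : GType P M) : Set (List (Arrow P M)) :=
  {w | ∃ s, G.evalFrom (some G.start) w = some s ∧ s ∈ G.accept}

/-- The arrows labelling the outgoing transitions of a state. -/
def choices (G : GType P M) (s : G.State) : Set (Arrow P M) := {a | (G.step s a).isSome}

/-- Commutation-determinism: no two arrows available at a same state commute. -/
def CommDet (G : GType P M) : Prop :=
  ∀ s : G.State, ∀ a ∈ G.choices s, ∀ b ∈ G.choices s, ¬ a.Commutes b

/-- Sender-driven choice: all arrows available at a same state have the same sender. -/
def SenderDriven (G : GType P M) : Prop :=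
  ∀ s : G.State, ∀ a ∈ G.choices s, ∀ b ∈ G.choices s, a.sender = b.sender

end GType

/-- The synchronous execution coded by a sequence of arrows. -/
def execOfArrows {P M : Type} (w : List (Arrow P M)) : Exec P M where
  w := (w.map (fun a => [a.sendAct, a.recvAct])).flatten
  src := fun i => i - 1

/-- The MSC coded by a sequence of arrows. -/
def mscOfArrows {P M : Type} [DecidableEq P] (w : List (Arrow P M)) : MSC P M :=
  (execOfArrows w).toMSC

/-- The set of MSCs of sequences of arrows (MSCs linearisable in the synchronous model). -/
def MSCsynch (P M : Type) [DecidableEq P] : Set (MSC P M) :=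
  Set.range (mscOfArrows (P := P) (M := M))

/-- The existential MSC language of a global type. -/
def Lexists {P M : Type} [DecidableEq P] (G : GType P M) : Set (MSC P M) :=
  mscOfArrows '' G.lang

/-- The universal MSC language of a global type. -/
def Lforall {P M : Type} [DecidableEq P] (G : GType P M) : Set (MSC P M) :=
  {Mm | (∃ w, mscOfArrows w = Mm) ∧ ∀ w, mscOfArrows w = Mm → w ∈ G.lang}

/-- A global type is commutation-closed when its existential and universal MSC
languages coincide. -/
def GType.CommClosed {P M : Type} [DecidableEq P] (G : GType P M) : Prop :=
  Lexists G = Lforall G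

/-- The relabelling of an arrow for the projection onto process `p`. -/
def projLabel {P M : Type} [DecidableEq P] (p : P) (a : Arrow P M) : Option (Act P M) :=
  if a.sender = p then some a.sendAct
  else if a.receiver = p then some a.recvAct
  else none

/-- The projected system of CFSMs of a global type. -/
def projG {P M : Type} [DecidableEq P] (G : GType P M) : P → CFSM (Act P M) :=
  fun p =>
    ⟨G.State, G.fin,
      { step := fun s oa =>
          {s' | ∃ arr : Arrow P M, G.step s arr = some s' ∧ projLabel p arr = oa},
        start := {G.start},
        accept := G.accept }⟩

/-- `Exec(G, Com)`: the semantics of a global type in a communication model. -/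
def ExecG {P M : Type} [DecidableEq P] (G : GType P M) (Com : Set (Exec P M)) :
    Set (Exec P M) :=
  {e | ∃ Mm ∈ Lexists G, e ∈ linC Com Mm}

/-- Deadlock-free realisability of a global type in a communication model:
(CC) conformance and (DF) deadlock freedom of the projected system. -/
def DFRealisable {P M : Type} [DecidableEq P] (G : GType P M) (Com : Set (Exec P M)) : Prop :=
  ExecSys (projG G) Com = ExecG G Com ∧ DeadlockFree (projG G) Com

/-- The synchronous product of a system of CFSMs: an ε-NFA over arrows. -/
def syncProd {P M : Type} (S : P → CFSM (Act P M)) :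
    εNFA (Arrow P M) (∀ p, (S p).State) where
  step st oa :=
    match oa with
    | some a =>
        {st' | st' a.sender ∈ (S a.sender).aut.step (st a.sender) (some a.sendAct) ∧
               st' a.receiver ∈ (S a.receiver).aut.step (st a.receiver) (some a.recvAct) ∧
               ∀ r, r ≠ a.sender → r ≠ a.receiver → st' r = st r}
    | none =>
        {st' | ∃ p, st' p ∈ (S p).aut.step (st p) none ∧ ∀ r, r ≠ p → st' r = st r}
  start := {st | ∀ p, st p ∈ (S p).aut.start}
  accept := {st | ∀ p, st p ∈ (S p).aut.accept}

/-- `prod(S)`: the powerset determinisation of the synchronous product, a global type. -/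
noncomputable def prodG {P M : Type} [Fintype P] (S : P → CFSM (Act P M)) : GType P M :=
  let A := (syncProd S).toNFA.toDFA
  { State := Set (∀ p, (S p).State)
    fin := by
      haveI : Finite (∀ p, (S p).State) := inferInstance
      exact Fintype.ofFinite _
    step := fun s a => some (A.step s a)
    start := A.start
    accept := A.accept }

/-- The product `G₁ ⊗ G₂` of two global types (language intersection). -/
def prodGT {P M : Type} (G₁ G₂ : GType P M) : GType P M where
  State := G₁.State × G₂.State
  fin := inferInstance
  step s a := (G₁.step s.1 a).bind fun q₁ => (G₂.step s.2 a).map fun q₂ => (q₁, q₂)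
  start := (G₁.start, G₂.start)
  accept := {s | s.1 ∈ G₁.accept ∧ s.2 ∈ G₂.accept}

/-- The dual of a global type: complete it and swap accepting and non-accepting states. -/
def dualG {P M : Type} (G : GType P M) : GType P M where
  State := Option G.State
  fin := inferInstance
  step s a := some (s.bind fun q => G.step q a)
  start := some G.start
  accept := {s | ∀ q, s = some q → q ∉ G.accept}

/-- RSC executions: every receive immediately follows its source send. -/
def RSCexec {P M : Type} : Set (Exec P M) :=
  {e | e.WF ∧ ∀ r, e.IsRecv r → e.src r = r - 1}

/-- The MSCs admitting an RSC linearisation. -/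
def MSCrsc {P M : Type} [DecidableEq P] : Set (MSC P M) :=
  {Mm | ∃ e ∈ RSCexec (P := P) (M := M), e.toMSC = Mm}

/-- A set of MSCs is RegSC if some NFA over actions accepts exactly the RSC executions
whose MSC belongs to the set. -/
def RegSCset {P M : Type} [DecidableEq P] (X : Set (MSC P M)) : Prop :=
  ∃ (σ : Type) (_ : Fintype σ) (A : NFA (Act P M) σ),
    ∀ w : List (Act P M),
      w ∈ A.accepts ↔ ∃ e ∈ RSCexec (P := P) (M := M), e.w = w ∧ e.toMSC ∈ X

/-- A communication model is RegSC if the set of its RSC-linearisable MSCs is RegSC. -/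
def RegSCmodel {P M : Type} [DecidableEq P] (Com : Set (Exec P M)) : Prop :=
  RegSCset (MSCModel Com ∩ MSCrsc)

/-! ## Auxiliary lemmas for stmt1 -/
section Stmt1Aux

variable {P M : Type} [DecidableEq P]

namespace Stmt1

/-- number of actions of process `p` among the first `i` positions -/
def cnt (e : Exec P M) (p : P) (i : ℕ) : ℕ :=
  ((e.w.take i).filter (fun b => decide (b.proc = p))).length

lemma act?_lt {e : Exec P M} {i : ℕ} {a : Act P M} (h : e.act? i = some a) :
    i < e.w.length := by
  simpa using (List.getElem?_eq_some_iff.mp h).1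

lemma evOf_eq_cnt {e : Exec P M} {i : ℕ} {a : Act P M} (h : e.act? i = some a) :
    e.evOf i = some (a.proc, cnt e a.proc i) := by
  simp [Exec.evOf, h, cnt]

lemma evOf_some {e : Exec P M} {i : ℕ} {ev : P × ℕ} (h : e.evOf i = some ev) :
    ∃ a, e.act? i = some a ∧ a.proc = ev.1 ∧ cnt e ev.1 i = ev.2 := by
  rcases ha : e.act? i with _ | a
  · simp [Exec.evOf, ha] at h
  · have := evOf_eq_cnt ha
    rw [h] at this
    have h2 : ev = (a.proc, cnt e a.proc i) := Option.some_injective _ this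
    exact ⟨a, rfl, by rw [h2], by rw [h2]⟩

lemma cnt_mono (e : Exec P M) (p : P) {i j : ℕ} (h : i ≤ j) :
    cnt e p i ≤ cnt e p j := by
  have : e.w.take i <+: e.w.take j := by
    rw [show e.w.take i = (e.w.take j).take i by rw [List.take_take, min_eq_left h]]
    exact List.take_prefix _ _
  exact (this.filter _).length_le

lemma cnt_succ {e : Exec P M} {i : ℕ} {a : Act P M} (h : e.act? i = some a)
    (p : P) (hp : a.proc = p) : cnt e p (i + 1) = cnt e p i + 1 := by
  unfold cnt
  rw [List.take_succ]
  have : e.w[i]? = some a := h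
  rw [this]
  simp [List.filter_append, hp]

lemma cnt_lt {e : Exec P M} {i j : ℕ} {a : Act P M} (h : e.act? i = some a)
    {p : P} (hp : a.proc = p) (hij : i < j) : cnt e p i < cnt e p j := by
  have h1 := cnt_succ h p hp
  have h2 := cnt_mono e p (show i + 1 ≤ j from hij)
  omega

lemma evOf_lt_iff {e : Exec P M} {i j : ℕ} {p : P} {ki kj : ℕ}
    (hi : e.evOf i = some (p, ki)) (hj : e.evOf j = some (p, kj)) :
    ki < kj ↔ i < j := by
  obtain ⟨a, ha, hap, hka⟩ := evOf_some hi
  obtain ⟨b, hb, hbp, hkb⟩ := evOf_some hj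
  have hka' : cnt e p i = ki := hka
  have hkb' : cnt e p j = kj := hkb
  have hap' : a.proc = p := hap
  have hbp' : b.proc = p := hbp
  constructor
  · intro hk
    rcases lt_trichotomy i j with h | h | h
    · exact h
    · subst h; rw [ha] at hb; cases hb; omega
    · have := cnt_lt hb hbp' h; omega
  · intro hij
    exact hka' ▸ hkb' ▸ cnt_lt ha hap' hij

lemma evOf_inj {e : Exec P M} {i j : ℕ} {ev : P × ℕ}
    (hi : e.evOf i = some ev) (hj : e.evOf j = some ev) : i = j := by
  obtain ⟨p, k⟩ := ev
  have h1 := evOf_lt_iff hi hj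
  have h2 := evOf_lt_iff hj hi
  omega

/-- generic: the element at position `i` of `l` with `Q` true sits in `l.filter Q`
at index `((l.take i).filter Q).length`. -/
lemma filter_getElem? {α : Type*} (Q : α → Bool) {l : List α} {i : ℕ} {a : α}
    (h : l[i]? = some a) (hq : Q a = true) :
    (l.filter Q)[((l.take i).filter Q).length]? = some a := by
  have hi : i < l.length := by simpa using (List.getElem?_eq_some_iff.mp h).1
  have hget : l[i] = a := by
    have := List.getElem?_eq_getElem hi
    rw [h] at this; exact (Option.some_injective _ this.symm)
  have hdrop : l.drop i = a :: l.drop (i + 1) := by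
    rw [← List.getElem_cons_drop hi, hget]
  have hsplit : l.filter Q = (l.take i).filter Q ++ a :: (l.drop (i+1)).filter Q := by
    conv_lhs => rw [← List.take_append_drop i l]
    rw [List.filter_append, hdrop, List.filter_cons_of_pos hq]
  rw [hsplit, List.getElem?_append_right (le_refl _)]
  simp

lemma filter_getElem?_rev {α : Type*} (Q : α → Bool) :
    ∀ {l : List α} {k : ℕ} {a : α}, (l.filter Q)[k]? = some a →
    ∃ i, l[i]? = some a ∧ ((l.take i).filter Q).length = k ∧ Q a = true := by
  intro l
  induction l with
  | nil => simp
  | cons b t ih =>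
    intro k a h
    by_cases hb : Q b
    · rw [List.filter_cons_of_pos hb] at h
      cases k with
      | zero =>
        simp only [List.getElem?_cons_zero] at h
        obtain rfl : b = a := Option.some_injective _ h
        exact ⟨0, by simp, by simp, hb⟩
      | succ k =>
        simp only [List.getElem?_cons_succ] at h
        obtain ⟨i, h1, h2, h3⟩ := ih h
        exact ⟨i + 1, by simpa using h1, by simp [List.filter_cons_of_pos hb, h2], h3⟩
    · rw [List.filter_cons_of_neg hb] at h
      obtain ⟨i, h1, h2, h3⟩ := ih h
      exact ⟨i + 1, by simpa using h1, by simp [List.filter_cons_of_neg hb, h2], h3⟩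

lemma cnt_eq_rangeFilter (e : Exec P M) (p : P) :
    ∀ i, i ≤ e.w.length →
      (((List.range i).filter
        (fun k => decide ((e.act? k).map Act.proc = some p))).length = cnt e p i) := by
  intro i
  induction i with
  | zero => intro; simp [cnt]
  | succ i ih =>
    intro hi
    have hi' : i < e.w.length := by omega
    have ha : e.act? i = some e.w[i] := List.getElem?_eq_getElem hi'
    rw [List.range_succ, List.filter_append]
    unfold cnt
    rw [List.take_succ, show e.w[i]? = some e.w[i] from ha, List.filter_append]
    have := ih (by omega)
    unfold cnt at this
    simp only [List.length_append, this]
    congr 1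
    by_cases hp : e.w[i].proc = p
    · simp [ha, hp]
    · simp [ha, hp]

lemma posOf_evOf {e : Exec P M} {i : ℕ} {ev : P × ℕ} (hev : e.evOf i = some ev) :
    e.posOf ev = i := by
  obtain ⟨a, ha, hap, hcnt⟩ := evOf_some hev
  have hi : i < e.w.length := act?_lt ha
  unfold Exec.posOf
  have hQ : (fun k => decide ((e.act? k).map Act.proc = some ev.1)) i = true := by
    simp [ha, hap]
  have hr : (List.range e.w.length)[i]? = some i := by
    simp [List.getElem?_range hi]
  have key := filter_getElem? (fun k => decide ((e.act? k).map Act.proc = some ev.1)) hr hQ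
  have htake : (List.range e.w.length).take i = List.range i := by
    rw [List.take_range, min_eq_left (le_of_lt hi)]
  rw [htake, cnt_eq_rangeFilter e ev.1 i (le_of_lt hi), hcnt] at key
  rw [List.getD_eq_getElem?_getD, key]
  rfl

lemma toMSC_act {e : Exec P M} {i : ℕ} {a : Act P M} {ev : P × ℕ}
    (h : e.act? i = some a) (hev : e.evOf i = some ev) :
    e.toMSC.act? ev = some a := by
  obtain ⟨a', ha', hap, hcnt⟩ := evOf_some hev
  rw [h] at ha'; obtain rfl : a = a' := Option.some_injective _ ha'
  show (e.w.filter (fun b => decide (b.proc = ev.1)))[ev.2]? = some a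
  rw [← hcnt]
  exact filter_getElem? _ h (by simp [hap])

lemma toMSC_act_rev {e : Exec P M} {ev : P × ℕ} {a : Act P M}
    (h : e.toMSC.act? ev = some a) :
    ∃ i, e.act? i = some a ∧ e.evOf i = some ev := by
  obtain ⟨i, h1, h2, h3⟩ := filter_getElem?_rev _ h
  refine ⟨i, h1, ?_⟩
  rw [evOf_eq_cnt h1]
  have hap : a.proc = ev.1 := by simpa using h3
  have : cnt e ev.1 i = ev.2 := h2
  rw [hap, this]

lemma toMSC_src {e : Exec P M} (hWF : e.WF) {r : ℕ} {p q : P} {m : M} {rv : P × ℕ}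
    (h : e.act? r = some (.rcv p q m)) (hrv : e.evOf r = some rv) :
    ∃ sev, e.evOf (e.src r) = some sev ∧ e.toMSC.src rv = sev := by
  obtain ⟨hlt, hsa⟩ := hWF.1 r p q m h
  have hsev := evOf_eq_cnt hsa
  refine ⟨_, hsev, ?_⟩
  show (e.evOf (e.src (e.posOf rv))).getD rv = _
  rw [posOf_evOf hrv, hsev]
  rfl

/-- MSC-level matching of a send event -/
def MatchedEv (Mm : MSC P M) (ev : P × ℕ) : Prop :=
  ∃ rv, Mm.IsRecv rv ∧ Mm.src rv = ev

lemma matched_iff {e : Exec P M} (hWF : e.WF) {s : ℕ} {ev : P × ℕ}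
    (hev : e.evOf s = some ev) :
    e.Matched s ↔ MatchedEv e.toMSC ev := by
  constructor
  · rintro ⟨r, ⟨p, q, m, hr⟩, hsrc⟩
    have hrv := evOf_eq_cnt hr
    obtain ⟨sev, hs1, hs2⟩ := toMSC_src hWF hr hrv
    rw [hsrc, hev] at hs1
    obtain rfl : ev = sev := Option.some_injective _ hs1
    exact ⟨_, ⟨p, q, m, toMSC_act hr hrv⟩, hs2⟩
  · rintro ⟨rv, ⟨p, q, m, hrv⟩, hsrc⟩
    obtain ⟨r, hr, hev'⟩ := toMSC_act_rev hrv
    obtain ⟨sev, hs1, hs2⟩ := toMSC_src hWF hr hev'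
    rw [hsrc] at hs2
    rw [hs2] at hev
    exact ⟨r, ⟨p, q, m, hr⟩, evOf_inj hs1 hev⟩

end Stmt1

end Stmt1Aux
section Stmt1Aux2

variable {P M : Type} [DecidableEq P]

namespace Stmt1

/-- MSC-level p2p condition. -/
def P2Pmsc (Mm : MSC P M) : Prop :=
  ∀ i j p q m₁ m₂, Mm.act? (p, i) = some (.snd p q m₁) →
    Mm.act? (p, j) = some (.snd p q m₂) → i < j →
    (¬ MatchedEv Mm (p, j) ∨
      ∃ k l, k < l ∧ Mm.IsRecv (q, k) ∧ Mm.IsRecv (q, l) ∧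
        Mm.src (q, k) = (p, i) ∧ Mm.src (q, l) = (p, j))

/-- MSC-level causal condition. -/
def Causalmsc (Mm : MSC P M) : Prop :=
  ∀ ev₁ ev₂ p₁ p₂ q m₁ m₂, Mm.act? ev₁ = some (.snd p₁ q m₁) →
    Mm.act? ev₂ = some (.snd p₂ q m₂) → Mm.hb ev₁ ev₂ →
    (¬ MatchedEv Mm ev₂ ∨
      ∃ rv₁ rv₂, Mm.hb rv₁ rv₂ ∧ Mm.IsRecv rv₁ ∧ Mm.IsRecv rv₂ ∧
        Mm.src rv₁ = ev₁ ∧ Mm.src rv₂ = ev₂)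

/-- label of a receive event whose source's label is known -/
lemma recv_label {e : Exec P M} (hWF : e.WF) {r s : ℕ} {p q : P} {m : M}
    (hR : e.IsRecv r) (hsrc : e.src r = s) (hs : e.act? s = some (.snd p q m)) :
    e.act? r = some (.rcv p q m) := by
  obtain ⟨p', q', m', hr⟩ := hR
  obtain ⟨-, hsa⟩ := hWF.1 r p' q' m' hr
  rw [hsrc, hs] at hsa
  cases Option.some_injective _ hsa
  exact hr

lemma p2p_cond_iff {e : Exec P M} (hWF : e.WF) :
    (∀ s₁ s₂ p q m₁ m₂,
      e.act? s₁ = some (.snd p q m₁) → e.act? s₂ = some (.snd p q m₂) → s₁ < s₂ →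
      (¬ e.Matched s₂ ∨
        ∃ r₁ r₂, r₁ < r₂ ∧ e.IsRecv r₁ ∧ e.IsRecv r₂ ∧ e.src r₁ = s₁ ∧ e.src r₂ = s₂)) ↔
    P2Pmsc e.toMSC := by
  constructor
  · intro hc i j p q m₁ m₂ h1 h2 hij
    obtain ⟨s₁, hs1, hev1⟩ := toMSC_act_rev h1
    obtain ⟨s₂, hs2, hev2⟩ := toMSC_act_rev h2
    have hslt : s₁ < s₂ := (evOf_lt_iff hev1 hev2).mp hij
    rcases hc s₁ s₂ p q m₁ m₂ hs1 hs2 hslt with hnm | ⟨r₁, r₂, hrlt, hR1, hR2, hsrc1, hsrc2⟩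
    · exact Or.inl (fun hm => hnm ((matched_iff hWF hev2).mpr hm))
    · have hr1 : e.act? r₁ = some (.rcv p q m₁) := recv_label hWF hR1 hsrc1 hs1
      have hr2 : e.act? r₂ = some (.rcv p q m₂) := recv_label hWF hR2 hsrc2 hs2
      have hev1' := evOf_eq_cnt hr1
      have hev2' := evOf_eq_cnt hr2
      obtain ⟨sev1, ha1, hb1⟩ := toMSC_src hWF hr1 hev1'
      obtain ⟨sev2, ha2, hb2⟩ := toMSC_src hWF hr2 hev2'
      rw [hsrc1, hev1] at ha1
      rw [hsrc2, hev2] at ha2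
      cases Option.some_injective _ ha1
      cases Option.some_injective _ ha2
      refine Or.inr ⟨cnt e q r₁, cnt e q r₂, ?_, ⟨p, q, m₁, toMSC_act hr1 hev1'⟩,
        ⟨p, q, m₂, toMSC_act hr2 hev2'⟩, hb1, hb2⟩
      exact (evOf_lt_iff (p := q) hev1' hev2').mpr hrlt
  · intro hc s₁ s₂ p q m₁ m₂ hs1 hs2 hslt
    have hev1 := evOf_eq_cnt hs1
    have hev2 := evOf_eq_cnt hs2
    have hij : cnt e p s₁ < cnt e p s₂ := (evOf_lt_iff (p := p) hev1 hev2).mpr hslt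
    rcases hc (cnt e p s₁) (cnt e p s₂) p q m₁ m₂ (toMSC_act hs1 hev1) (toMSC_act hs2 hev2) hij
      with hnm | ⟨k, l, hkl, ⟨p₁, q₁, mm₁, hk⟩, ⟨p₂, q₂, mm₂, hl⟩, hsrck, hsrcl⟩
    · exact Or.inl (fun hm => hnm ((matched_iff hWF hev2).mp hm))
    · obtain ⟨r₁, hr1, hevr1⟩ := toMSC_act_rev hk
      obtain ⟨r₂, hr2, hevr2⟩ := toMSC_act_rev hl
      obtain ⟨sev1, ha1, hb1⟩ := toMSC_src hWF hr1 hevr1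
      obtain ⟨sev2, ha2, hb2⟩ := toMSC_src hWF hr2 hevr2
      rw [hsrck] at hb1; rw [hsrcl] at hb2
      rw [← hb1] at ha1; rw [← hb2] at ha2
      have hsrc1 : e.src r₁ = s₁ := evOf_inj ha1 hev1
      have hsrc2 : e.src r₂ = s₂ := evOf_inj ha2 hev2
      refine Or.inr ⟨r₁, r₂, ?_, ⟨p₁, q₁, mm₁, hr1⟩, ⟨p₂, q₂, mm₂, hr2⟩, hsrc1, hsrc2⟩
      exact (evOf_lt_iff (p := q) hevr1 hevr2).mp hkl

lemma causal_cond_iff {e : Exec P M} (hWF : e.WF) :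
    (∀ s₁ s₂ p₁ p₂ q m₁ m₂,
      e.act? s₁ = some (.snd p₁ q m₁) → e.act? s₂ = some (.snd p₂ q m₂) → e.hbM s₁ s₂ →
      (¬ e.Matched s₂ ∨
        ∃ r₁ r₂, e.hbM r₁ r₂ ∧ e.IsRecv r₁ ∧ e.IsRecv r₂ ∧ e.src r₁ = s₁ ∧ e.src r₂ = s₂)) ↔
    Causalmsc e.toMSC := by
  constructor
  · intro hc ev₁ ev₂ p₁ p₂ q m₁ m₂ h1 h2 hhb
    obtain ⟨s₁, hs1, hev1⟩ := toMSC_act_rev h1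
    obtain ⟨s₂, hs2, hev2⟩ := toMSC_act_rev h2
    rcases hc s₁ s₂ p₁ p₂ q m₁ m₂ hs1 hs2 ⟨ev₁, ev₂, hev1, hev2, hhb⟩
      with hnm | ⟨r₁, r₂, ⟨rv₁, rv₂, hevr1, hevr2, hhb'⟩, hR1, hR2, hsrc1, hsrc2⟩
    · exact Or.inl (fun hm => hnm ((matched_iff hWF hev2).mpr hm))
    · obtain ⟨a₁, b₁, c₁, hr1⟩ := hR1
      obtain ⟨a₂, b₂, c₂, hr2⟩ := hR2
      obtain ⟨sev1, ha1, hb1⟩ := toMSC_src hWF hr1 hevr1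
      obtain ⟨sev2, ha2, hb2⟩ := toMSC_src hWF hr2 hevr2
      rw [hsrc1, hev1] at ha1
      rw [hsrc2, hev2] at ha2
      cases Option.some_injective _ ha1
      cases Option.some_injective _ ha2
      exact Or.inr ⟨rv₁, rv₂, hhb', ⟨a₁, b₁, c₁, toMSC_act hr1 hevr1⟩,
        ⟨a₂, b₂, c₂, toMSC_act hr2 hevr2⟩, hb1, hb2⟩
  · intro hc s₁ s₂ p₁ p₂ q m₁ m₂ hs1 hs2 hhb
    obtain ⟨ev₁, ev₂, hev1, hev2, hhb'⟩ := hhb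
    rcases hc ev₁ ev₂ p₁ p₂ q m₁ m₂ (toMSC_act hs1 hev1) (toMSC_act hs2 hev2) hhb'
      with hnm | ⟨rv₁, rv₂, hhb'', ⟨a₁, b₁, c₁, hk⟩, ⟨a₂, b₂, c₂, hl⟩, hsrck, hsrcl⟩
    · exact Or.inl (fun hm => hnm ((matched_iff hWF hev2).mp hm))
    · obtain ⟨r₁, hr1, hevr1⟩ := toMSC_act_rev hk
      obtain ⟨r₂, hr2, hevr2⟩ := toMSC_act_rev hl
      obtain ⟨sev1, ha1, hb1⟩ := toMSC_src hWF hr1 hevr1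
      obtain ⟨sev2, ha2, hb2⟩ := toMSC_src hWF hr2 hevr2
      rw [hsrck] at hb1; rw [hsrcl] at hb2
      rw [← hb1] at ha1; rw [← hb2] at ha2
      exact Or.inr ⟨r₁, r₂, ⟨rv₁, rv₂, hevr1, hevr2, hhb''⟩, ⟨a₁, b₁, c₁, hr1⟩,
        ⟨a₂, b₂, c₂, hr2⟩, evOf_inj ha1 hev1, evOf_inj ha2 hev2⟩

end Stmt1

end Stmt1Aux2

/-- the communication models `p2p`, `causal` and `bag` are causally-closed. -/
theorem stmt1 (P Mg : Type) [Fintype P] [DecidableEq P] [Fintype Mg] [DecidableEq Mg] :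
    CausallyClosed (p2p : Set (Exec P Mg)) ∧
    CausallyClosed (causal : Set (Exec P Mg)) ∧
    CausallyClosed (bag : Set (Exec P Mg)) := by
  refine ⟨?_, ?_, ?_⟩
  · intro Mm ⟨e₀, ⟨hWF₀, hM₀⟩, hWF₀', hcond₀⟩
    have hP : Stmt1.P2Pmsc Mm := hM₀ ▸ (Stmt1.p2p_cond_iff hWF₀).mp hcond₀
    apply Set.Subset.antisymm (Set.inter_subset_left)
    intro e ⟨hWF, hM⟩
    exact ⟨⟨hWF, hM⟩, hWF, (Stmt1.p2p_cond_iff hWF).mpr (hM ▸ hP)⟩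
  · intro Mm ⟨e₀, ⟨hWF₀, hM₀⟩, hWF₀', hcond₀⟩
    have hP : Stmt1.Causalmsc Mm := hM₀ ▸ (Stmt1.causal_cond_iff hWF₀).mp hcond₀
    apply Set.Subset.antisymm (Set.inter_subset_left)
    intro e ⟨hWF, hM⟩
    exact ⟨⟨hWF, hM⟩, hWF, (Stmt1.causal_cond_iff hWF).mpr (hM ▸ hP)⟩
  · intro Mm _
    apply Set.Subset.antisymm (Set.inter_subset_left)
    intro e ⟨hWF, hM⟩
    exact ⟨⟨hWF, hM⟩, hWF⟩
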